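/- Let p ≥ 1, let F : ℝ^p → ℝ, let n ≥ 1, let β^{(0)}, …, β^{(n)}, β⋆, τ_1, …, τ_n, η_1, …, η_n ∈ ℝ^p, let γ_0, …, γ_n > 0, and let D^{(1)}, …, D^{(n)} be p×p diagonal matrices with positive diagonal entries. Assume that for each t = 1, …, n: (a) ‖β^{(t)} − β⋆‖_{D^{(t)}}² ≤ ‖β^{(t−1)} − β⋆‖_{D^{(t)}}² − 2γ_t (F(β^{(t)}) − F(β⋆)) − 2γ_t ⟨β^{(t)} − β⋆, η_t⟩_{D^{(t)}}, and (b) ‖β^{(t)} − τ_t‖_{D^{(t)}} ≤ γ_t ‖η_t‖_{D^{(t)}}. Then Σ_{t=1}^n (F(β^{(t)}) − F(β⋆)) ≤ Σ_{t=1}^n (1/2)(1/γ_t − 1/γ_{t−1}) ‖β^{(t−1)} − β⋆‖_{D^{(t)}}² + (1/(2γ_0)) ‖β^{(0)} − β⋆‖_{D^{(1)}}² + Σ_{t=1}^{n−1} (1/(2γ_t)) (β^{(t)} − β⋆)ᵀ (D^{(t+1)} − D^{(t)}) (β^{(t)} − β⋆) − Σ_{t=1}^n ⟨τ_t − β⋆,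 η_t⟩_{D^{(t)}} + Σ_{t=1}^n γ_t ‖η_t‖_{D^{(t)}}². -/

import Mathlib

open scoped BigOperators
open MeasureTheory Filter

noncomputable def dInner {p : ℕ} (d : Fin p → ℝ) (x y : EuclideanSpace ℝ (Fin p)) : ℝ :=
  ∑ i, d i * x i * y i

noncomputable def dNorm {p : ℕ} (d : Fin p → ℝ) (x : EuclideanSpace ℝ (Fin p)) : ℝ :=
  Real.sqrt (dInner d x x)

noncomputable def dInvMul {p : ℕ} (d : Fin p → ℝ) (v : EuclideanSpace ℝ (Fin p)) :
    EuclideanSpace ℝ (Fin p) :=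
  WithLp.toLp 2 (fun i => (d i)⁻¹ * v i)

lemma dInner_self_nonneg {p : ℕ} {d : Fin p → ℝ} (hd : ∀ i, 0 ≤ d i)
    (x : EuclideanSpace ℝ (Fin p)) : 0 ≤ dInner d x x :=
  Finset.sum_nonneg fun i _ => by nlinarith [hd i, sq_nonneg (x i)]

lemma sq_dNorm {p : ℕ} {d : Fin p → ℝ} (hd : ∀ i, 0 ≤ d i)
    (x : EuclideanSpace ℝ (Fin p)) : dNorm d x ^ 2 = dInner d x x :=
  Real.sq_sqrt (dInner_self_nonneg hd x)

lemma abs_dInner_le {p : ℕ} {d : Fin p → ℝ} (hd : ∀ i, 0 ≤ d i)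
    (x y : EuclideanSpace ℝ (Fin p)) :
    |dInner d x y| ≤ dNorm d x * dNorm d y := by
  have h1 : dInner d x y = ∑ i, (Real.sqrt (d i) * x i) * (Real.sqrt (d i) * y i) := by
    unfold dInner
    refine Finset.sum_congr rfl fun i _ => ?_
    linear_combination (x i * y i) * (Real.mul_self_sqrt (hd i)).symm
  have hx : ∑ i, (Real.sqrt (d i) * x i) ^ 2 = dInner d x x := by
    unfold dInner
    refine Finset.sum_congr rfl fun i _ => ?_
    linear_combination (x i * x i) * (Real.mul_self_sqrt (hd i))
  have hy : ∑ i, (Real.sqrt (d i) * y i) ^ 2 = dInner d y y := by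
    unfold dInner
    refine Finset.sum_congr rfl fun i _ => ?_
    linear_combination (y i * y i) * (Real.mul_self_sqrt (hd i))
  have CS := Finset.sum_mul_sq_le_sq_mul_sq Finset.univ
      (fun i => Real.sqrt (d i) * x i) (fun i => Real.sqrt (d i) * y i)
  rw [h1]
  have h2 : |∑ i, (Real.sqrt (d i) * x i) * (Real.sqrt (d i) * y i)|
      = Real.sqrt ((∑ i, (Real.sqrt (d i) * x i) * (Real.sqrt (d i) * y i)) ^ 2) :=
    (Real.sqrt_sq_eq_abs _).symm
  rw [h2]
  calc Real.sqrt ((∑ i, (Real.sqrt (d i) * x i) * (Real.sqrt (d i) * y i)) ^ 2)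
      ≤ Real.sqrt ((∑ i, (Real.sqrt (d i) * x i) ^ 2) * ∑ i, (Real.sqrt (d i) * y i) ^ 2) :=
        Real.sqrt_le_sqrt CS
    _ = dNorm d x * dNorm d y := by
        rw [hx, hy, Real.sqrt_mul (dInner_self_nonneg hd x)]; rfl

lemma dInner_split {p : ℕ} (d : Fin p → ℝ) (a b c w : EuclideanSpace ℝ (Fin p)) :
    dInner d (a - c) w = dInner d (b - c) w + dInner d (a - b) w := by
  unfold dInner
  rw [← Finset.sum_add_distrib]
  refine Finset.sum_congr rfl fun i _ => ?_
  have h1 : (a - c) i = a i - c i := rfl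
  have h2 : (b - c) i = b i - c i := rfl
  have h3 : (a - b) i = a i - b i := rfl
  rw [h1, h2, h3]; ring

lemma sum_Icc_one (n : ℕ) (f : ℕ → ℝ) :
    ∑ t ∈ Finset.Icc 1 n, f t = ∑ i ∈ Finset.range n, f (i + 1) := by
  rw [← Finset.Ico_add_one_right_eq_Icc, Finset.sum_Ico_eq_sum_range]
  simp [add_comm]

lemma sum_ineq (m : ℕ) (a b : ℕ → ℝ) (γ : ℕ → ℝ) (hγ : ∀ t ≤ m + 1, 0 < γ t)
    (hb : 0 ≤ b m) :
    ∑ i ∈ Finset.range (m + 1), 1 / (2 * γ (i + 1)) * (a i - b i) ≤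
      (∑ i ∈ Finset.range (m + 1), 1 / 2 * (1 / γ (i + 1) - 1 / γ i) * a i) +
        1 / (2 * γ 0) * a 0 +
        ∑ i ∈ Finset.range m, 1 / (2 * γ (i + 1)) * (a (i + 1) - b i) := by
  have e1 : ∑ i ∈ Finset.range (m + 1), 1 / (2 * γ (i + 1)) * (a i - b i)
      = (∑ i ∈ Finset.range (m + 1), 1 / (2 * γ (i + 1)) * a i)
        - ∑ i ∈ Finset.range (m + 1), 1 / (2 * γ (i + 1)) * b i := by
    rw [← Finset.sum_sub_distrib]
    exact Finset.sum_congr rfl fun i _ => by ring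
  have e2 : ∑ i ∈ Finset.range (m + 1), 1 / 2 * (1 / γ (i + 1) - 1 / γ i) * a i
      = (∑ i ∈ Finset.range (m + 1), 1 / (2 * γ (i + 1)) * a i)
        - ∑ i ∈ Finset.range (m + 1), 1 / (2 * γ i) * a i := by
    rw [← Finset.sum_sub_distrib]
    refine Finset.sum_congr rfl fun i _ => ?_
    field_simp
  have e3 : ∑ i ∈ Finset.range (m + 1), 1 / (2 * γ i) * a i
      = (∑ i ∈ Finset.range m, 1 / (2 * γ (i + 1)) * a (i + 1)) + 1 / (2 * γ 0) * a 0 :=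
    Finset.sum_range_succ' _ m
  have e4 : ∑ i ∈ Finset.range (m + 1), 1 / (2 * γ (i + 1)) * b i
      = (∑ i ∈ Finset.range m, 1 / (2 * γ (i + 1)) * b i) + 1 / (2 * γ (m + 1)) * b m :=
    Finset.sum_range_succ _ m
  have e5 : ∑ i ∈ Finset.range m, 1 / (2 * γ (i + 1)) * (a (i + 1) - b i)
      = (∑ i ∈ Finset.range m, 1 / (2 * γ (i + 1)) * a (i + 1))
        - ∑ i ∈ Finset.range m, 1 / (2 * γ (i + 1)) * b i := by
    rw [← Finset.sum_sub_distrib]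
    exact Finset.sum_congr rfl fun i _ => by ring
  have hγm : 0 < γ (m + 1) := hγ (m + 1) le_rfl
  have hbm : 0 ≤ 1 / (2 * γ (m + 1)) * b m := by positivity
  linarith

/-- Summing the one-step descent inequality (a) together with the
nonexpansiveness bound (b) over `t = 1, …, n` yields the key bound on
`Σ_{t=1}^n (F(β^{(t)}) − F(β⋆))`. -/
theorem stmt_14 {p : ℕ} (hp : 1 ≤ p)
    (F : EuclideanSpace ℝ (Fin p) → ℝ)
    (n : ℕ) (hn : 1 ≤ n)
    (β : ℕ → EuclideanSpace ℝ (Fin p)) (βstar : EuclideanSpace ℝ (Fin p))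
    (τ η : ℕ → EuclideanSpace ℝ (Fin p))
    (γ : ℕ → ℝ) (hγ : ∀ t ≤ n, 0 < γ t)
    (d : ℕ → Fin p → ℝ) (hd : ∀ t, 1 ≤ t → t ≤ n → ∀ i, 0 < d t i)
    (ha : ∀ t, 1 ≤ t → t ≤ n →
      (dNorm (d t) (β t - βstar)) ^ 2 ≤
        (dNorm (d t) (β (t - 1) - βstar)) ^ 2 -
          2 * γ t * (F (β t) - F βstar) -
          2 * γ t * dInner (d t) (β t - βstar) (η t))
    (hb : ∀ t, 1 ≤ t → t ≤ n →
      dNorm (d t) (β t - τ t) ≤ γ t * dNorm (d t) (η t)) :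
    ∑ t ∈ Finset.Icc 1 n, (F (β t) - F βstar) ≤
      (∑ t ∈ Finset.Icc 1 n,
          (1 / 2) * (1 / γ t - 1 / γ (t - 1)) * (dNorm (d t) (β (t - 1) - βstar)) ^ 2) +
        (1 / (2 * γ 0)) * (dNorm (d 1) (β 0 - βstar)) ^ 2 +
        (∑ t ∈ Finset.Icc 1 (n - 1),
          (1 / (2 * γ t)) *
            (∑ i, (d (t + 1) i - d t i) * (β t - βstar) i * (β t - βstar) i)) -
        (∑ t ∈ Finset.Icc 1 n, dInner (d t) (τ t - βstar) (η t)) +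
        ∑ t ∈ Finset.Icc 1 n, γ t * (dNorm (d t) (η t)) ^ 2 := by
  obtain ⟨m, rfl⟩ : ∃ m, n = m + 1 := ⟨n - 1, (Nat.succ_pred_eq_of_pos hn).symm⟩
  have hd' : ∀ t, 1 ≤ t → t ≤ m + 1 → ∀ i, (0:ℝ) ≤ d t i :=
    fun t h1 h2 i => (hd t h1 h2 i).le
  -- abbreviations
  set a : ℕ → ℝ := fun i => dInner (d (i + 1)) (β i - βstar) (β i - βstar) with ha_def
  set b : ℕ → ℝ := fun i => dInner (d (i + 1)) (β (i + 1) - βstar) (β (i + 1) - βstar)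
    with hb_def
  -- per-step inequality
  have key : ∀ i ∈ Finset.range (m + 1),
      F (β (i + 1)) - F βstar ≤
        1 / (2 * γ (i + 1)) * (a i - b i)
          - dInner (d (i + 1)) (τ (i + 1) - βstar) (η (i + 1))
          + γ (i + 1) * dNorm (d (i + 1)) (η (i + 1)) ^ 2 := by
    intro i hi
    rw [Finset.mem_range] at hi
    have ht1 : 1 ≤ i + 1 := Nat.le_add_left 1 i
    have ht2 : i + 1 ≤ m + 1 := hi
    have hγt : 0 < γ (i + 1) := hγ _ ht2
    have hdp := hd' (i + 1) ht1 ht2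
    have haa := ha (i + 1) ht1 ht2
    rw [sq_dNorm hdp, sq_dNorm hdp] at haa
    simp only [Nat.add_sub_cancel] at haa
    have hsplit := dInner_split (d (i + 1)) (β (i + 1)) (τ (i + 1)) βstar (η (i + 1))
    have hcs := abs_dInner_le hdp (β (i + 1) - τ (i + 1)) (η (i + 1))
    have hbb := hb (i + 1) ht1 ht2
    have hηn : 0 ≤ dNorm (d (i + 1)) (η (i + 1)) := Real.sqrt_nonneg _
    set N := dNorm (d (i + 1)) (η (i + 1)) ^ 2 with hN
    set X := dInner (d (i + 1)) (τ (i + 1) - βstar) (η (i + 1)) with hX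
    set W := dInner (d (i + 1)) (β (i + 1) - τ (i + 1)) (η (i + 1)) with hW
    have h3 : -(γ (i + 1) * N) ≤ W := by
      have h4 : dNorm (d (i + 1)) (β (i + 1) - τ (i + 1)) * dNorm (d (i + 1)) (η (i + 1)) ≤
          γ (i + 1) * N := by
        calc dNorm (d (i + 1)) (β (i + 1) - τ (i + 1)) * dNorm (d (i + 1)) (η (i + 1))
            ≤ (γ (i + 1) * dNorm (d (i + 1)) (η (i + 1))) * dNorm (d (i + 1)) (η (i + 1)) :=
              mul_le_mul_of_nonneg_right hbb hηn
          _ = γ (i + 1) * N := by rw [hN]; ring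
      have := neg_abs_le W
      linarith [hcs.trans h4]
    have h7 := mul_le_mul_of_nonneg_left h3 (by positivity : (0:ℝ) ≤ 2 * γ (i + 1))
    have h8 : 2 * γ (i + 1) * dInner (d (i + 1)) (β (i + 1) - βstar) (η (i + 1))
        = 2 * γ (i + 1) * X + 2 * γ (i + 1) * W := by rw [hsplit]; ring
    have h6 : 2 * γ (i + 1) * (F (β (i + 1)) - F βstar) ≤
        (a i - b i) - 2 * γ (i + 1) * X + 2 * γ (i + 1) * (γ (i + 1) * N) := by
      have : b i ≤ a i - 2 * γ (i + 1) * (F (β (i + 1)) - F βstar)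
          - 2 * γ (i + 1) * dInner (d (i + 1)) (β (i + 1) - βstar) (η (i + 1)) := haa
      linarith [h7, h8 ▸ this]
    have hcpos : 0 < 1 / (2 * γ (i + 1)) := by positivity
    calc F (β (i + 1)) - F βstar
        = 1 / (2 * γ (i + 1)) * (2 * γ (i + 1) * (F (β (i + 1)) - F βstar)) := by
          field_simp
      _ ≤ 1 / (2 * γ (i + 1)) *
            ((a i - b i) - 2 * γ (i + 1) * X + 2 * γ (i + 1) * (γ (i + 1) * N)) :=
          mul_le_mul_of_nonneg_left h6 hcpos.le
      _ = 1 / (2 * γ (i + 1)) * (a i - b i) - X + γ (i + 1) * N := by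
          field_simp
  -- rewrite the goal using range sums
  simp only [Nat.add_sub_cancel]
  rw [sum_Icc_one, sum_Icc_one, sum_Icc_one, sum_Icc_one, sum_Icc_one]
  simp only [Nat.add_sub_cancel]
  -- rewrite dNorm² as dInner where needed
  have eT1 : ∀ i ∈ Finset.range (m + 1),
      1 / 2 * (1 / γ (i + 1) - 1 / γ i) * dNorm (d (i + 1)) (β i - βstar) ^ 2
        = 1 / 2 * (1 / γ (i + 1) - 1 / γ i) * a i := fun i hi => by
    rw [sq_dNorm (hd' (i + 1) (Nat.le_add_left 1 i) (Finset.mem_range.mp hi))]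
  have eT2 : dNorm (d 1) (β 0 - βstar) ^ 2 = a 0 :=
    sq_dNorm (hd' 1 le_rfl (Nat.le_add_left 1 m)) _
  have eT3 : ∀ i ∈ Finset.range m,
      1 / (2 * γ (i + 1)) *
          (∑ j, (d (i + 1 + 1) j - d (i + 1) j) * (β (i + 1) - βstar) j * (β (i + 1) - βstar) j)
        = 1 / (2 * γ (i + 1)) * (a (i + 1) - b i) := by
    intro i hi
    congr 1
    show _ = dInner (d (i + 2)) (β (i + 1) - βstar) (β (i + 1) - βstar)
      - dInner (d (i + 1)) (β (i + 1) - βstar) (β (i + 1) - βstar)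
    unfold dInner
    rw [← Finset.sum_sub_distrib]
    exact Finset.sum_congr rfl fun j _ => by ring
  rw [Finset.sum_congr rfl eT1, eT2, Finset.sum_congr rfl eT3]
  -- combine
  have hbm : 0 ≤ b m :=
    dInner_self_nonneg (hd' (m + 1) (Nat.le_add_left 1 m) le_rfl) _
  have main := sum_ineq m a b γ hγ hbm
  calc ∑ i ∈ Finset.range (m + 1), (F (β (i + 1)) - F βstar)
      ≤ ∑ i ∈ Finset.range (m + 1),
          (1 / (2 * γ (i + 1)) * (a i - b i)
            - dInner (d (i + 1)) (τ (i + 1) - βstar) (η (i + 1))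
            + γ (i + 1) * dNorm (d (i + 1)) (η (i + 1)) ^ 2) :=
        Finset.sum_le_sum key
    _ = (∑ i ∈ Finset.range (m + 1), 1 / (2 * γ (i + 1)) * (a i - b i))
          - (∑ i ∈ Finset.range (m + 1), dInner (d (i + 1)) (τ (i + 1) - βstar) (η (i + 1)))
          + ∑ i ∈ Finset.range (m + 1), γ (i + 1) * dNorm (d (i + 1)) (η (i + 1)) ^ 2 := by
        rw [Finset.sum_add_distrib, Finset.sum_sub_distrib]
    _ ≤ _ := by linarith
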